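/- (Replica-trick purity identity, Eq. (purityLOE).) Let ιA, ιB be finite types and let O be a Hermitian matrix on ιA × ιB (Oᴴ = O), with d := card ιA * card ιB. Then the purity of the reduced Choi state equals a four-replica trace against the permutation operator T': tr(ρ_A(O)²) = (1/d²) · tr(O^{⊗4} * T'). -/

import Mathlib

open Matrix Kronecker
open scoped Classical

noncomputable section

/-- Single-qubit Pauli matrices. -/
def pauli : Fin 4 → Matrix (Fin 2) (Fin 2) ℂ :=
  ![1, !![0, 1; 1, 0], !![0, -Complex.I; Complex.I, 0], !![1, 0; 0, -1]]

/-- Pauli string on `N` qubits with label `a`. -/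
def PauliString {N : ℕ} (a : Fin N → Fin 4) :
    Matrix (Fin N → Fin 2) (Fin N → Fin 2) ℂ :=
  fun f g => ∏ k, pauli (a k) (f k) (g k)

/-- Reduced Choi state: partial trace over the doubled-B factor of the
normalized Choi state of `O`. -/
def rhoA {ιA ιB : Type*} [Fintype ιA] [Fintype ιB]
    (O : Matrix (ιA × ιB) (ιA × ιB) ℂ) :
    Matrix (ιA × ιA) (ιA × ιA) ℂ :=
  fun p q =>
    (1 / (Fintype.card ιA * Fintype.card ιB : ℂ)) *
      ∑ b : ιB, ∑ b' : ιB, O (p.1, b) (p.2, b') * star (O (q.1, b) (q.2, b'))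

/-- Identification of `N = N_A + N_B` qubits with the pair of subsystems. -/
def qubitEquiv (NA NB : ℕ) :
    (Fin (NA + NB) → Fin 2) ≃ (Fin NA → Fin 2) × (Fin NB → Fin 2) :=
  (Equiv.arrowCongr finSumFinEquiv.symm (Equiv.refl (Fin 2))).trans
    (Equiv.sumArrowEquivProdArrow _ _ _)

/-- Reduced Choi state of an `N = N_A + N_B` qubit operator, subsystem A
being the first `N_A` qubits. -/
def rhoAq (NA NB : ℕ)
    (O : Matrix (Fin (NA + NB) → Fin 2) (Fin (NA + NB) → Fin 2) ℂ) :
    Matrix ((Fin NA → Fin 2) × (Fin NA → Fin 2))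
      ((Fin NA → Fin 2) × (Fin NA → Fin 2)) ℂ :=
  rhoA (Matrix.reindex (qubitEquiv NA NB) (qubitEquiv NA NB) O)

/-- `n`-fold replica (tensor power) of a matrix. -/
def replica {ι : Type*} (n : ℕ) (O : Matrix ι ι ℂ) :
    Matrix (Fin n → ι) (Fin n → ι) ℂ :=
  fun f g => ∏ a, O (f a) (g a)

/-- Replica permutation operator. -/
def Tperm {ι : Type*} [DecidableEq ι] {n : ℕ} (π : Equiv.Perm (Fin n)) :
    Matrix (Fin n → ι) (Fin n → ι) ℂ :=
  fun f g => if f = g ∘ π then 1 else 0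

/-- Number of cycles of a permutation, counting fixed points as 1-cycles. -/
def numCycles {n : ℕ} (π : Equiv.Perm (Fin n)) : ℕ :=
  Multiset.card π.cycleType + (Finset.univ.filter fun x => π x = x).card

/-- `δ(π) = 0` if `π` has no fixed points and all cycles of even length,
else `δ(π) = 1`. -/
def deltaOdd {n : ℕ} (π : Equiv.Perm (Fin n)) : ℕ :=
  if (∀ x, π x ≠ x) ∧ (∀ c ∈ π.cycleType, Even c) then 0 else 1

/-- Projector onto four-fold replicated Pauli strings. -/
def LambdaPlus (N : ℕ) :
    Matrix (Fin 4 → (Fin N → Fin 2)) (Fin 4 → (Fin N → Fin 2)) ℂ :=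
  (1 / (4 ^ N : ℂ)) • ∑ a : Fin N → Fin 4, replica 4 (PauliString a)

def permA : Equiv.Perm (Fin 4) := Equiv.swap 0 1 * Equiv.swap 2 3
def permB : Equiv.Perm (Fin 4) := Equiv.swap 0 3 * Equiv.swap 1 2

/-- The purity contraction permutation operator `T'` on four replicas of a
bipartite system. -/
def Tprime {ιA ιB : Type*} [DecidableEq ιA] [DecidableEq ιB] :
    Matrix (Fin 4 → ιA × ιB) (Fin 4 → ιA × ιB) ℂ :=
  fun f g =>
    if (∀ a, (f a).1 = (g (permA a)).1 ∧ (f a).2 = (g (permB a)).2) then 1 else 0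

/-- The unitary stabilizer group of `U` (as a finite set of pairs of Pauli
labels). -/
def Stab {N : ℕ} (U : Matrix (Fin N → Fin 2) (Fin N → Fin 2) ℂ) :
    Finset ((Fin N → Fin 4) × (Fin N → Fin 4)) :=
  Finset.univ.filter fun p =>
    Matrix.trace (PauliString p.1 * Uᴴ * PauliString p.2 * U) / (2 ^ N : ℂ)
      ∈ ({1, -1} : Set ℂ)


/-- replica-trick purity identity: the purity of the reduced
Choi state equals the four-replica trace against `T'`. -/
theorem purity_replica_trick {ιA ιB : Type*}
    [Fintype ιA] [Fintype ιB] [DecidableEq ιA] [DecidableEq ιB]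
    (O : Matrix (ιA × ιB) (ιA × ιB) ℂ) (hO : Oᴴ = O) :
    Matrix.trace (rhoA O * rhoA O) =
      (1 / (Fintype.card ιA * Fintype.card ιB : ℂ) ^ 2) *
        Matrix.trace (replica 4 O * Tprime) := by
  classical
  have hstar : ∀ x y, star (O x y) = O y x := by
    intro x y; rw [← conjTranspose_apply, hO]
  set d : ℂ := (Fintype.card ιA * Fintype.card ιB : ℂ) with hd
  -- Right-hand side: collapse the sum over `g` using the delta `Tprime`.
  have hR : Matrix.trace (replica 4 O * Tprime) =
      ∑ f : Fin 4 → ιA × ιB,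
        O (f 0) ((f 1).1, (f 3).2) * O (f 1) ((f 0).1, (f 2).2) *
        (O (f 2) ((f 3).1, (f 1).2) * O (f 3) ((f 2).1, (f 0).2)) := by
    rw [Matrix.trace]
    simp only [Matrix.diag_apply, Matrix.mul_apply]
    refine Finset.sum_congr rfl fun f _ => ?_
    have hT : ∀ g : Fin 4 → ιA × ιB, (Tprime g f : ℂ) =
        if g = (fun a => ((f (permA a)).1, (f (permB a)).2)) then 1 else 0 := by
      intro g
      unfold Tprime
      congr 1
      simp [funext_iff, Prod.ext_iff]
    simp only [hT, mul_ite, mul_one, mul_zero, Finset.sum_ite_eq',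
      Finset.mem_univ, if_true]
    have hA0 : permA 0 = 1 := by decide
    have hA1 : permA 1 = 0 := by decide
    have hA2 : permA 2 = 3 := by decide
    have hA3 : permA 3 = 2 := by decide
    have hB0 : permB 0 = 3 := by decide
    have hB1 : permB 1 = 2 := by decide
    have hB2 : permB 2 = 1 := by decide
    have hB3 : permB 3 = 0 := by decide
    simp only [replica, Fin.prod_univ_four, hA0, hA1, hA2, hA3, hB0, hB1, hB2, hB3]
    ring
  -- The reindexing equivalence
  let e : (ιA × ιA × ιA × ιA × ιB × ιB × ιB × ιB) ≃ (Fin 4 → ιA × ιB) :=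
    { toFun := fun z =>
        ![(z.1, z.2.2.2.2.2.2.1), (z.2.1, z.2.2.2.2.2.1),
          (z.2.2.1, z.2.2.2.2.1), (z.2.2.2.1, z.2.2.2.2.2.2.2)]
      invFun := fun f =>
        ((f 0).1, (f 1).1, (f 2).1, (f 3).1, (f 2).2, (f 1).2, (f 0).2, (f 3).2)
      left_inv := fun z => rfl
      right_inv := fun f => by
        funext a
        fin_cases a <;> rfl }
  rw [hR, ← Equiv.sum_comp e]
  -- Left-hand side: expand trace and products of sums.
  rw [Matrix.trace]
  simp only [Matrix.diag_apply, Matrix.mul_apply, rhoA, hstar, ← hd]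
  have hc : ∀ X Y : ℂ, (1 / d * X) * (1 / d * Y) = 1 / d ^ 2 * (X * Y) := by
    intro X Y; ring
  simp only [hc, ← Finset.mul_sum]
  congr 1
  simp only [Finset.sum_mul, Finset.mul_sum, Fintype.sum_prod_type]
  refine Finset.sum_congr rfl fun p1 _ => ?_
  refine Finset.sum_congr rfl fun p2 _ => ?_
  refine Finset.sum_congr rfl fun q1 _ => ?_
  refine Finset.sum_congr rfl fun q2 _ => ?_
  refine Finset.sum_congr rfl fun b _ => ?_
  refine Finset.sum_congr rfl fun b' _ => ?_
  refine Finset.sum_congr rfl fun c _ => ?_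
  refine Finset.sum_congr rfl fun c' _ => ?_
  show _ = O _ _ * O _ _ * (O _ _ * O _ _)
  change _ = O (p1, c) (p2, c') * O (p2, b') (p1, b) * (O (q1, b) (q2, b') * O (q2, c') (q1, c))
  ring

end
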